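/- Let (X, M, *) be a compact fuzzy metric space with the Łukasiewicz t-norm. If a sequence (μᵢ) in P(X) converges to μ ∈ P(X) in the topology induced by the fuzzy Prokhorov metric M̂, then (μᵢ) converges weakly* to μ, i.e., limsup_{i→∞} μᵢ(C) ≤ μ(C) for every closed set C ⊆ X. -/

import Mathlib

open Set MeasureTheory Filter Topology

noncomputable section

/-- The Łukasiewicz t-norm. -/
def luk (a b : ℝ) : ℝ := max (a + b - 1) 0

/-- A continuous t-norm on `[0,1]`. -/
structure IsContinuousTNorm (star : ℝ → ℝ → ℝ) : Prop where
  maps_to : ∀ a b, a ∈ Icc (0:ℝ) 1 → b ∈ Icc (0:ℝ) 1 → star a b ∈ Icc (0:ℝ) 1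
  comm : ∀ a b, a ∈ Icc (0:ℝ) 1 → b ∈ Icc (0:ℝ) 1 → star a b = star b a
  assoc : ∀ a b c, a ∈ Icc (0:ℝ) 1 → b ∈ Icc (0:ℝ) 1 → c ∈ Icc (0:ℝ) 1 →
    star (star a b) c = star a (star b c)
  continuous : ContinuousOn (fun p : ℝ × ℝ => star p.1 p.2) (Icc 0 1 ×ˢ Icc 0 1)
  one_right : ∀ a, a ∈ Icc (0:ℝ) 1 → star a 1 = a
  mono : ∀ a b c d, a ∈ Icc (0:ℝ) 1 → b ∈ Icc (0:ℝ) 1 → c ∈ Icc (0:ℝ) 1 →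
    d ∈ Icc (0:ℝ) 1 → a ≤ c → b ≤ d → star a b ≤ star c d

/-- A fuzzy metric (George–Veeramani) with respect to a t-norm `star`. -/
structure IsFuzzyMetric {X : Type*} (M : X → X → ℝ → ℝ) (star : ℝ → ℝ → ℝ) : Prop where
  pos : ∀ x y t, 0 < t → 0 < M x y t
  le_one : ∀ x y t, 0 < t → M x y t ≤ 1
  eq_one_iff : ∀ x y t, 0 < t → (M x y t = 1 ↔ x = y)
  symm : ∀ x y t, 0 < t → M x y t = M y x t
  triangle : ∀ x y z t s, 0 < t → 0 < s → star (M x y t) (M y z s) ≤ M x z (t + s)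
  continuousOn : ∀ x y, ContinuousOn (fun t => M x y t) (Ioi (0:ℝ))

/-- The open ball `B(x,r,t)` in a fuzzy metric space. -/
def fmBall {X : Type*} (M : X → X → ℝ → ℝ) (x : X) (r t : ℝ) : Set X :=
  {y | 1 - r < M x y t}

/-- The `r,t`-expansion `A^{r,t}` of a set `A`. -/
def fmExpand {X : Type*} (M : X → X → ℝ → ℝ) (A : Set X) (r t : ℝ) : Set X :=
  ⋃ x ∈ A, fmBall M x r t

/-- The fuzzy metric `M` generates the given topology on `X`. -/
def GeneratesTopology {X : Type*} [TopologicalSpace X] (M : X → X → ℝ → ℝ) : Prop :=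
  TopologicalSpace.IsTopologicalBasis
    {s : Set X | ∃ x r t, 0 < r ∧ r < 1 ∧ 0 < t ∧ s = fmBall M x r t}

/-- The set of admissible radii in the definition of the fuzzy Prokhorov metric. -/
def prokSet {X : Type*} [MeasurableSpace X] (M : X → X → ℝ → ℝ)
    (μ ν : Measure X) (t : ℝ) : Set ℝ :=
  {r | 0 < r ∧ r < 1 ∧ ∀ A : Set X, MeasurableSet A →
    μ A ≤ ν (fmExpand M A r t) + ENNReal.ofReal r ∧
    ν A ≤ μ (fmExpand M A r t) + ENNReal.ofReal r}

/-- The fuzzy Prokhorov function `M̂` on measures. -/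
def fuzzyProkhorov {X : Type*} [MeasurableSpace X] (M : X → X → ℝ → ℝ)
    (μ ν : Measure X) (t : ℝ) : ℝ :=
  1 - sInf (prokSet M μ ν t)

section Aux
variable {X : Type*} {M : X → X → ℝ → ℝ}

lemma luk_ge (a b : ℝ) : a + b - 1 ≤ luk a b := le_max_left _ _

lemma M_self (hM : IsFuzzyMetric M luk) (x : X) {t : ℝ} (ht : 0 < t) : M x x t = 1 :=
  (hM.eq_one_iff x x t ht).mpr rfl

lemma M_mono (hM : IsFuzzyMetric M luk) (x y : X) {t s : ℝ} (ht : 0 < t) (hts : t ≤ s) :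
    M x y t ≤ M x y s := by
  rcases eq_or_lt_of_le hts with h | h
  · exact le_of_eq (by rw [h])
  · have htri := hM.triangle x y y t (s - t) ht (by linarith)
    have h1 : M y y (s - t) = 1 := M_self hM y (by linarith)
    rw [h1] at htri
    have : M x y t ≤ luk (M x y t) 1 :=
      le_trans (le_of_eq (by ring)) (luk_ge _ _)
    have he : t + (s - t) = s := by ring
    rw [he] at htri
    linarith

lemma M_lsc (hM : IsFuzzyMetric M luk) {x₀ y₀ : X} {t c : ℝ} (ht : 0 < t)
    (hc : c < M x₀ y₀ t) :
    ∃ s δ : ℝ, 0 < s ∧ 0 < δ ∧ δ < 1 ∧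
      ∀ x y, 1 - δ < M x₀ x s → 1 - δ < M y₀ y s → c < M x y t := by
  set m := M x₀ y₀ t with hm
  set δ : ℝ := min ((m - c) / 3) (1 / 2) with hδ
  have hδ0 : 0 < δ := lt_min (by linarith) (by norm_num)
  have hδ1 : δ < 1 := lt_of_le_of_lt (min_le_right _ _) (by norm_num)
  have h3δ : 3 * δ ≤ m - c := by
    have := min_le_left ((m - c) / 3) (1 / 2)
    rw [hδ]; nlinarith [min_le_left ((m - c) / 3) (1 / 2)]
  have hcont : ContinuousWithinAt (fun u => M x₀ y₀ u) (Ioi (0:ℝ)) t :=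
    hM.continuousOn x₀ y₀ t (mem_Ioi.mpr ht)
  rw [Metric.continuousWithinAt_iff] at hcont
  obtain ⟨η, hη, hprop⟩ := hcont δ hδ0
  set s : ℝ := min (t / 4) (η / 4) with hs
  have hs0 : 0 < s := lt_min (by linarith) (by linarith)
  set u : ℝ := t - 2 * s with hu
  have hu0 : 0 < u := by
    have := min_le_left (t / 4) (η / 4); rw [hu]; nlinarith
  have hdist : dist u t < η := by
    have h1 : s ≤ η / 4 := min_le_right _ _
    rw [Real.dist_eq, hu]
    rw [abs_of_nonpos (by linarith)]
    linarith
  have hMu : m - δ < M x₀ y₀ u := by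
    have := hprop (mem_Ioi.mpr hu0) hdist
    rw [Real.dist_eq, abs_lt] at this
    linarith [this.1]
  refine ⟨s, δ, hs0, hδ0, hδ1, fun x y hx hy => ?_⟩
  have T1 := hM.triangle x x₀ y s (u + s) hs0 (by linarith)
  have T2 := hM.triangle x₀ y₀ y u s hu0 hs0
  have he : s + (u + s) = t := by rw [hu]; ring
  rw [he] at T1
  have hxx : M x x₀ s = M x₀ x s := hM.symm x x₀ s hs0
  have h1 : M x x₀ s + M x₀ y (u + s) - 1 ≤ M x y t := le_trans (luk_ge _ _) T1
  have h2 : M x₀ y₀ u + M y₀ y s - 1 ≤ M x₀ y (u + s) := le_trans (luk_ge _ _) T2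
  rw [hxx] at h1
  linarith

variable [TopologicalSpace X]

lemma ball_open (hgen : GeneratesTopology M) {x : X} {r t : ℝ}
    (hr : 0 < r) (hr1 : r < 1) (ht : 0 < t) : IsOpen (fmBall M x r t) :=
  hgen.isOpen ⟨x, r, t, hr, hr1, ht, rfl⟩

lemma expand_open (hgen : GeneratesTopology M) {A : Set X} {r t : ℝ}
    (hr : 0 < r) (hr1 : r < 1) (ht : 0 < t) : IsOpen (fmExpand M A r t) :=
  isOpen_biUnion fun _ _ => ball_open hgen hr hr1 ht

lemma mem_ball_self (hM : IsFuzzyMetric M luk) {x : X} {r t : ℝ}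
    (hr : 0 < r) (ht : 0 < t) : x ∈ fmBall M x r t := by
  simp only [fmBall, mem_setOf_eq, M_self hM x ht]; linarith

lemma subset_expand (hM : IsFuzzyMetric M luk) {A : Set X} {r t : ℝ}
    (hr : 0 < r) (ht : 0 < t) : A ⊆ fmExpand M A r t :=
  fun a ha => mem_biUnion ha (mem_ball_self hM hr ht)

lemma expand_mono (hM : IsFuzzyMetric M luk) {A : Set X} {r r' t t' : ℝ}
    (ht : 0 < t) (hr : r ≤ r') (htt : t ≤ t') :
    fmExpand M A r t ⊆ fmExpand M A r' t' := by
  intro y hy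
  obtain ⟨x, hx, hball⟩ := mem_iUnion₂.mp hy
  refine mem_biUnion hx ?_
  have h1 : M x y t ≤ M x y t' := M_mono hM x y ht htt
  simp only [fmBall, mem_setOf_eq] at hball ⊢
  linarith

lemma exists_lb (hM : IsFuzzyMetric M luk) (hgen : GeneratesTopology M)
    [CompactSpace X] {t : ℝ} (ht : 0 < t) :
    ∃ c : ℝ, 0 < c ∧ ∀ x y : X, c ≤ M x y t := by
  set U : ℕ → Set (X × X) := fun n => {p | 1 / (n + 1 : ℝ) < M p.1 p.2 t} with hU
  have hopen : ∀ n, IsOpen (U n) := by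
    intro n
    rw [isOpen_iff_mem_nhds]
    rintro ⟨x₀, y₀⟩ hp
    obtain ⟨s, δ, hs0, hδ0, hδ1, hcl⟩ := M_lsc hM ht hp
    rw [mem_nhds_iff]
    refine ⟨fmBall M x₀ δ s ×ˢ fmBall M y₀ δ s, ?_, 
      (ball_open hgen hδ0 hδ1 hs0).prod (ball_open hgen hδ0 hδ1 hs0),
      ⟨mem_ball_self hM hδ0 hs0, mem_ball_self hM hδ0 hs0⟩⟩
    rintro ⟨x, y⟩ ⟨hx, hy⟩
    exact hcl x y hx hy
  have hcover : (univ : Set (X × X)) ⊆ ⋃ n, U n := by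
    rintro ⟨x, y⟩ -
    obtain ⟨n, hn⟩ := exists_nat_one_div_lt (hM.pos x y t ht)
    exact mem_iUnion.mpr ⟨n, hn⟩
  obtain ⟨F, hF⟩ := isCompact_univ.elim_finite_subcover U hopen hcover
  set n : ℕ := F.sup id with hn
  refine ⟨1 / (n + 1 : ℝ), by positivity, fun x y => ?_⟩
  have := hF (mem_univ (x, y))
  obtain ⟨i, hi, hmem⟩ := mem_iUnion₂.mp this
  have hin : (i : ℕ) ≤ n := Finset.le_sup (f := id) hi
  have : (1 : ℝ) / (n + 1) ≤ 1 / (i + 1) := by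
    apply one_div_le_one_div_of_le (by positivity)
    exact_mod_cast by omega
  exact le_of_lt (lt_of_le_of_lt this hmem)

end Aux

section Main
variable {X : Type*} {M : X → X → ℝ → ℝ} [TopologicalSpace X]

lemma prok_nonempty (hM : IsFuzzyMetric M luk) (hgen : GeneratesTopology M)
    [CompactSpace X] [MeasurableSpace X] (μ ν : Measure X)
    [IsProbabilityMeasure μ] [IsProbabilityMeasure ν] {t : ℝ} (ht : 0 < t) :
    (prokSet M μ ν t).Nonempty := by
  obtain ⟨c, hc, hlb⟩ := exists_lb hM hgen ht
  set r : ℝ := max (1 - c / 2) (1 / 2) with hr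
  have hr0 : 0 < r := lt_of_lt_of_le (by norm_num) (le_max_right _ _)
  have hr1 : r < 1 := max_lt (by linarith) (by norm_num)
  have hexp : ∀ A : Set X, A.Nonempty → fmExpand M A r t = univ := by
    intro A ⟨a, ha⟩
    refine eq_univ_of_forall fun y => ?_
    refine mem_biUnion ha ?_
    have h1 : 1 - r ≤ c / 2 := by
      have := le_max_left (1 - c / 2) (1 / 2); linarith
    have h2 : c ≤ M a y t := hlb a y
    simp only [fmBall, mem_setOf_eq]
    linarith
  refine ⟨r, hr0, hr1, fun A hA => ?_⟩
  rcases A.eq_empty_or_nonempty with rfl | hAne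
  · simp [fmExpand]
  · rw [hexp A hAne]
    constructor
    · calc μ A ≤ 1 := prob_le_one
        _ = ν univ := (measure_univ).symm
        _ ≤ ν univ + ENNReal.ofReal r := le_self_add
    · calc ν A ≤ 1 := prob_le_one
        _ = μ univ := (measure_univ).symm
        _ ≤ μ univ + ENNReal.ofReal r := le_self_add

end Main

set_option maxHeartbeats 1000000 in
/-- convergence in the fuzzy Prokhorov metric implies weak* convergence. -/
theorem fuzzyProkhorov_tendsto_implies_weakStar {X : Type*} [TopologicalSpace X]
    [CompactSpace X] [MeasurableSpace X] [BorelSpace X]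
    (M : X → X → ℝ → ℝ) (hM : IsFuzzyMetric M luk) (hgen : GeneratesTopology M)
    (μs : ℕ → ProbabilityMeasure X) (μ : ProbabilityMeasure X)
    (hconv : ∀ t : ℝ, 0 < t → ∀ r ∈ Ioo (0:ℝ) 1, ∃ N : ℕ, ∀ i ≥ N,
      1 - r < fuzzyProkhorov M (μs i : Measure X) (μ : Measure X) t) :
    ∀ C : Set X, IsClosed C →
      Filter.limsup (fun i => (μs i : Measure X) C) Filter.atTop ≤
        (μ : Measure X) C := by
  intro C hC
  have hCm : MeasurableSet C := hC.measurableSet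
  have key : ∀ ε : ℝ, 0 < ε → ε < 1 →
      ∀ᶠ i in atTop, (μs i : Measure X) C ≤ (μ : Measure X) C + ENNReal.ofReal ε := by
    intro ε hε hε1
    set e2 : ℝ := ε / 2 with he2
    have he2pos : 0 < e2 := by positivity
    -- the decreasing sequence of expansions
    set r : ℕ → ℝ := fun n => 1 / (n + 2 : ℝ) with hrdef
    have hrpos : ∀ n, 0 < r n := fun n => by positivity
    have hrlt1 : ∀ n, r n < 1 := fun n => by
      rw [hrdef]; rw [div_lt_one (by positivity)]; push_cast; linarith
    have hrant : ∀ m n : ℕ, m ≤ n → r n ≤ r m := by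
      intro m n h
      apply one_div_le_one_div_of_le (by positivity)
      have : (m : ℝ) ≤ n := by exact_mod_cast h
      linarith
    have hEo : ∀ k : ℕ, IsOpen (fmExpand M C (r k) (r k)) :=
      fun k => expand_open hgen (hrpos k) (hrlt1 k) (hrpos k)
    have hAnti : Antitone (fun k => fmExpand M C (r k) (r k)) := fun m k hmk =>
      expand_mono hM (hrpos k) (hrant m k hmk) (hrant m k hmk)
    have hInter : ⋂ k, fmExpand M C (r k) (r k) = C := by
      apply Subset.antisymm
      · intro y hy
        by_contra hyC
        obtain ⟨B, hB, hyB, hBsub⟩ :=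
          hgen.exists_subset_of_mem_open (show y ∈ Cᶜ from hyC) hC.isOpen_compl
        obtain ⟨x, ρ, τ, hρ0, hρ1, hτ0, rfl⟩ := hB
        have hyball : 1 - ρ < M x y τ := hyB
        obtain ⟨s, δ, hs0, hδ0, hδ1, hcl⟩ := M_lsc hM hτ0 hyball
        obtain ⟨k, hk⟩ := exists_nat_one_div_lt (lt_min hs0 hδ0)
        have hrk : r k < min s δ := by
          refine lt_of_le_of_lt ?_ hk
          apply one_div_le_one_div_of_le (by positivity)
          push_cast; linarith
        have hyEk : y ∈ fmExpand M C (r k) (r k) := mem_iInter.mp hy k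
        obtain ⟨xk, hxkC, hxkb⟩ := mem_iUnion₂.mp hyEk
        have hxkb' : 1 - r k < M xk y (r k) := hxkb
        have h1 : 1 - δ < M x x s := by rw [M_self hM x hs0]; linarith
        have h2 : 1 - δ < M y xk s := by
          have hmono : M xk y (r k) ≤ M xk y s :=
            M_mono hM xk y (hrpos k) (le_of_lt (lt_of_lt_of_le hrk (min_le_left _ _)))
          have hsymm : M xk y s = M y xk s := hM.symm xk y s hs0
          have hrδ : r k < δ := lt_of_lt_of_le hrk (min_le_right _ _)
          rw [← hsymm]
          linarith
        have : 1 - ρ < M x xk τ := hcl x xk h1 h2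
        exact (hBsub this) hxkC
      · intro y hy
        exact mem_iInter.mpr fun k => subset_expand hM (hrpos k) (hrpos k) hy
    have htend : Tendsto ((μ : Measure X) ∘ fun k => fmExpand M C (r k) (r k)) atTop
        (nhds ((μ : Measure X) (⋂ k, fmExpand M C (r k) (r k)))) :=
      tendsto_measure_iInter_atTop
        (fun k => (hEo k).measurableSet.nullMeasurableSet) hAnti ⟨0, measure_ne_top _ _⟩
    rw [hInter] at htend
    have hlt : (μ : Measure X) C < (μ : Measure X) C + ENNReal.ofReal e2 :=
      ENNReal.lt_add_right (measure_ne_top _ _) (ENNReal.ofReal_pos.mpr he2pos).ne'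
    have hev := htend.eventually_lt_const hlt
    rw [eventually_atTop] at hev
    obtain ⟨N₀, hN₀⟩ := hev
    obtain ⟨n₂, hn₂⟩ := exists_nat_one_div_lt he2pos
    obtain ⟨t0, ht0pos, ht0lt1, ht0e2, hEn⟩ : ∃ t0 : ℝ, 0 < t0 ∧ t0 < 1 ∧ t0 ≤ e2 ∧
        (μ : Measure X) (fmExpand M C t0 t0) < (μ : Measure X) C + ENNReal.ofReal e2 := by
      refine ⟨r (max N₀ n₂), hrpos _, hrlt1 _, ?_, hN₀ (max N₀ n₂) (le_max_left _ _)⟩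
      refine le_of_lt (lt_of_le_of_lt ?_ hn₂)
      apply one_div_le_one_div_of_le (by positivity)
      have : (n₂ : ℝ) ≤ ((max N₀ n₂ : ℕ) : ℝ) := by exact_mod_cast le_max_right N₀ n₂
      linarith
    obtain ⟨N, hN⟩ := hconv t0 ht0pos t0 ⟨ht0pos, ht0lt1⟩
    rw [eventually_atTop]
    refine ⟨N, fun i hi => ?_⟩
    have h1 := hN i hi
    simp only [fuzzyProkhorov] at h1
    have hsinf : sInf (prokSet M (μs i : Measure X) (μ : Measure X) t0) < t0 := by
      linarith
    have hne := prok_nonempty hM hgen (μs i : Measure X) (μ : Measure X) ht0pos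
    have hbdd : BddBelow (prokSet M (μs i : Measure X) (μ : Measure X) t0) :=
      ⟨0, fun x hx => le_of_lt hx.1⟩
    obtain ⟨s, hs_mem, hs_lt⟩ := (csInf_lt_iff hbdd hne).mp hsinf
    obtain ⟨hs0, hs1, hsA⟩ := hs_mem
    have hkey := (hsA C hCm).1
    calc (μs i : Measure X) C
        ≤ (μ : Measure X) (fmExpand M C s t0) + ENNReal.ofReal s := hkey
      _ ≤ (μ : Measure X) (fmExpand M C t0 t0) + ENNReal.ofReal s :=
          add_le_add_left (measure_mono (expand_mono hM ht0pos (le_of_lt hs_lt) le_rfl)) _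
      _ ≤ ((μ : Measure X) C + ENNReal.ofReal e2) + ENNReal.ofReal e2 :=
          add_le_add (le_of_lt hEn)
            (ENNReal.ofReal_le_ofReal (le_trans (le_of_lt hs_lt) ht0e2))
      _ = (μ : Measure X) C + ENNReal.ofReal ε := by
          rw [add_assoc, ← ENNReal.ofReal_add (by positivity) (by positivity)]
          norm_num [he2]
  refine ENNReal.le_of_forall_pos_le_add fun ε hε _ => ?_
  obtain ⟨e, hepos, he1, hee⟩ : ∃ e : ℝ, 0 < e ∧ e < 1 ∧
      ENNReal.ofReal e ≤ (ε : ENNReal) := by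
    refine ⟨min (ε : ℝ) (1 / 2), lt_min (by exact_mod_cast hε) (by norm_num),
      lt_of_le_of_lt (min_le_right _ _) (by norm_num), ?_⟩
    calc ENNReal.ofReal (min (ε : ℝ) (1 / 2)) ≤ ENNReal.ofReal (ε : ℝ) :=
          ENNReal.ofReal_le_ofReal (min_le_left _ _)
      _ = (ε : ENNReal) := ENNReal.ofReal_coe_nnreal
  have hls : Filter.limsup (fun i => (μs i : Measure X) C) Filter.atTop ≤
      (μ : Measure X) C + ENNReal.ofReal e :=
    limsup_le_of_le (by isBoundedDefault) (key e hepos he1)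
  exact le_trans hls (add_le_add_right hee _)
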